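/- Let ρ₁, ρ₂ be density matrices on Fin n and σ₁, σ₂ be density matrices on Fin m. Then D(ρ₁ ⊗ σ₁, ρ₂ ⊗ σ₂) ≤ D(ρ₁, ρ₂) + D(σ₁, σ₂), where ⊗ denotes the Kronecker product. -/

import Mathlib

open Matrix BigOperators ComplexOrder

/-- The trace norm of a Hermitian matrix: the sum of the absolute values of its
eigenvalues (defined to be `0` on non-Hermitian matrices). -/
noncomputable def traceNorm {n : Type*} [Fintype n] [DecidableEq n]
    (A : Matrix n n ℂ) : ℝ :=
  if h : A.IsHermitian then ∑ i, |h.eigenvalues i| else 0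

/-- The trace distance between two matrices. -/
noncomputable def traceDist {n : Type*} [Fintype n] [DecidableEq n]
    (ρ σ : Matrix n n ℂ) : ℝ :=
  (1 / 2) * traceNorm (ρ - σ)

/-- A density matrix: positive semidefinite with trace 1. -/
def IsDensityMatrix {n : Type*} [Fintype n] [DecidableEq n]
    (ρ : Matrix n n ℂ) : Prop :=
  ρ.PosSemidef ∧ ρ.trace = 1

open Kronecker

section Aux
variable {n : Type*} [Fintype n] [DecidableEq n]

lemma TNaux.diag_nonneg' {P : Matrix n n ℂ} (hP : P.PosSemidef) (i : n) : 0 ≤ P i i := by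
  exact hP.diag_nonneg

lemma TNaux.trace_conj_unitary (P : Matrix n n ℂ) (U : Matrix.unitaryGroup n ℂ) :
    ((star U.1) * P * U.1).trace = P.trace := by
  rw [Matrix.trace_mul_cycle, (Matrix.mem_unitaryGroup_iff).mp U.2, one_mul]

/-- Key: trace norm of a difference of PSD matrices is bounded by the sum of traces. -/
lemma TNaux.traceNorm_sub_le {P Q : Matrix n n ℂ} (hP : P.PosSemidef) (hQ : Q.PosSemidef) :
    traceNorm (P - Q) ≤ (P.trace).re + (Q.trace).re := by
  have hM : (P - Q).IsHermitian := hP.1.sub hQ.1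
  rw [traceNorm, dif_pos hM]
  set U := hM.eigenvectorUnitary with hU
  set P' := (star U.1) * P * U.1 with hP'
  set Q' := (star U.1) * Q * U.1 with hQ'
  have hP'psd : P'.PosSemidef := by
    exact hP.conjTranspose_mul_mul_same U.1
  have hQ'psd : Q'.PosSemidef := by
    exact hQ.conjTranspose_mul_mul_same U.1
  have hdiag : Matrix.diagonal (RCLike.ofReal ∘ hM.eigenvalues) = P' - Q' := by
    rw [← hM.conjStarAlgAut_star_eigenvectorUnitary, Unitary.conjStarAlgAut_apply, hP', hQ']
    simp only [Unitary.coe_star, star_star]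
    noncomm_ring
  have heig : ∀ i, (hM.eigenvalues i : ℂ) = P' i i - Q' i i := by
    intro i
    have := congrFun (congrFun hdiag i) i
    simpa [Matrix.diagonal_apply_eq] using this
  have hbound : ∀ i, |hM.eigenvalues i| ≤ (P' i i).re + (Q' i i).re := by
    intro i
    have h1 := TNaux.diag_nonneg' hP'psd i
    have h2 := TNaux.diag_nonneg' hQ'psd i
    have h1' : 0 ≤ (P' i i).re := (Complex.le_def.mp h1).1
    have h2' : 0 ≤ (Q' i i).re := (Complex.le_def.mp h2).1
    have hre : hM.eigenvalues i = (P' i i).re - (Q' i i).re := by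
      have := congrArg Complex.re (heig i)
      simpa using this
    rw [hre]
    calc |(P' i i).re - (Q' i i).re| ≤ |(P' i i).re| + |(Q' i i).re| := abs_sub _ _
      _ = (P' i i).re + (Q' i i).re := by rw [abs_of_nonneg h1', abs_of_nonneg h2']
  calc ∑ i, |hM.eigenvalues i| ≤ ∑ i, ((P' i i).re + (Q' i i).re) :=
        Finset.sum_le_sum fun i _ => hbound i
    _ = (P'.trace).re + (Q'.trace).re := by
        rw [Finset.sum_add_distrib, Matrix.trace, Matrix.trace, Complex.re_sum, Complex.re_sum]
        rfl
    _ = (P.trace).re + (Q.trace).re := by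
        rw [hP', hQ', TNaux.trace_conj_unitary, TNaux.trace_conj_unitary]

/-- Decomposition of a Hermitian matrix into PSD parts with traces summing to trace norm. -/
lemma TNaux.exists_decomp {A : Matrix n n ℂ} (hA : A.IsHermitian) :
    ∃ P Q : Matrix n n ℂ, P.PosSemidef ∧ Q.PosSemidef ∧ A = P - Q ∧
      (P.trace).re + (Q.trace).re = traceNorm A := by
  set U := hA.eigenvectorUnitary with hU
  set lam := hA.eigenvalues with hlam
  refine ⟨U.1 * Matrix.diagonal (fun i => ((max (lam i) 0 : ℝ) : ℂ)) * star U.1,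
          U.1 * Matrix.diagonal (fun i => ((max (-lam i) 0 : ℝ) : ℂ)) * star U.1, ?_, ?_, ?_, ?_⟩
  · have := (Matrix.posSemidef_diagonal_iff.mpr
      (fun i => Complex.zero_le_real.mpr (le_max_right (lam i) 0))).mul_mul_conjTranspose_same U.1
    simpa [Matrix.star_eq_conjTranspose] using this
  · have := (Matrix.posSemidef_diagonal_iff.mpr
      (fun i => Complex.zero_le_real.mpr (le_max_right (-lam i) 0))).mul_mul_conjTranspose_same U.1
    simpa [Matrix.star_eq_conjTranspose] using this
  · have h : Matrix.diagonal (fun i => ((max (lam i) 0 : ℝ) : ℂ)) -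
        Matrix.diagonal (fun i => ((max (-lam i) 0 : ℝ) : ℂ)) =
        Matrix.diagonal (RCLike.ofReal ∘ lam) := by
      ext i j
      rcases eq_or_ne i j with rfl | hij
      · simp only [Matrix.sub_apply, Matrix.diagonal_apply_eq, Function.comp_apply]
        rw [← Complex.ofReal_sub, max_zero_sub_max_neg_zero_eq_self]
        rfl
      · simp [Matrix.sub_apply, Matrix.diagonal_apply_ne _ hij]
    conv_lhs => rw [hA.spectral_theorem, ← h]
    rw [Unitary.conjStarAlgAut_apply, Matrix.mul_sub, Matrix.sub_mul]
  · have ht : ∀ f : n → ℝ, ((U.1 * Matrix.diagonal (fun i => (f i : ℂ)) * star U.1).trace).re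
        = ∑ i, f i := by
      intro f
      rw [Matrix.trace_mul_cycle, (Matrix.mem_unitaryGroup_iff').mp U.2, one_mul,
        Matrix.trace_diagonal]
      simp [Complex.re_sum]
    rw [ht, ht, traceNorm, dif_pos hA, ← Finset.sum_add_distrib]
    congr 1
    funext i
    show max (lam i) 0 + max (-lam i) 0 = |lam i|
    rcases le_total (lam i) 0 with h | h
    · rw [max_eq_right h, max_eq_left (neg_nonneg.mpr h), abs_of_nonpos h, zero_add]
    · rw [max_eq_left h, max_eq_right (neg_nonpos.mpr h), abs_of_nonneg h, add_zero]

end Aux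

section Kron
variable {n m : Type*} [Fintype n] [DecidableEq n] [Fintype m] [DecidableEq m]

lemma TNaux.sub_kronecker (A B : Matrix n n ℂ) (C : Matrix m m ℂ) :
    (A - B) ⊗ₖ C = A ⊗ₖ C - B ⊗ₖ C := by
  ext ⟨i, k⟩ ⟨j, l⟩
  simp [sub_mul]

lemma TNaux.kronecker_sub (A : Matrix n n ℂ) (B C : Matrix m m ℂ) :
    A ⊗ₖ (B - C) = A ⊗ₖ B - A ⊗ₖ C := by
  ext ⟨i, k⟩ ⟨j, l⟩
  simp [mul_sub]

lemma TNaux.conjTranspose_kronecker (A : Matrix n n ℂ) (B : Matrix m m ℂ) :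
    (A ⊗ₖ B)ᴴ = Aᴴ ⊗ₖ Bᴴ := by
  ext ⟨i, k⟩ ⟨j, l⟩
  simp [Matrix.conjTranspose_apply, mul_comm]

lemma TNaux.posSemidef_kronecker {A : Matrix n n ℂ} {B : Matrix m m ℂ}
    (hA : A.PosSemidef) (hB : B.PosSemidef) : (A ⊗ₖ B).PosSemidef := by
  exact hA.kronecker hB

end Kron

/-- Subadditivity of trace distance for tensor products. -/
theorem traceDist_kronecker_le {n m : ℕ}
    (ρ₁ ρ₂ : Matrix (Fin n) (Fin n) ℂ) (σ₁ σ₂ : Matrix (Fin m) (Fin m) ℂ)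
    (hρ₁ : IsDensityMatrix ρ₁) (hρ₂ : IsDensityMatrix ρ₂)
    (hσ₁ : IsDensityMatrix σ₁) (hσ₂ : IsDensityMatrix σ₂) :
    traceDist (ρ₁ ⊗ₖ σ₁) (ρ₂ ⊗ₖ σ₂) ≤ traceDist ρ₁ ρ₂ + traceDist σ₁ σ₂ := by
  have hA : (ρ₁ - ρ₂).IsHermitian := hρ₁.1.1.sub hρ₂.1.1
  have hB : (σ₁ - σ₂).IsHermitian := hσ₁.1.1.sub hσ₂.1.1
  obtain ⟨P, Q, hP, hQ, hPQ, htrPQ⟩ := TNaux.exists_decomp hA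
  obtain ⟨R, S, hR, hS, hRS, htrRS⟩ := TNaux.exists_decomp hB
  have hPbig : (P ⊗ₖ σ₁ + ρ₂ ⊗ₖ R).PosSemidef :=
    (TNaux.posSemidef_kronecker hP hσ₁.1).add (TNaux.posSemidef_kronecker hρ₂.1 hR)
  have hQbig : (Q ⊗ₖ σ₁ + ρ₂ ⊗ₖ S).PosSemidef :=
    (TNaux.posSemidef_kronecker hQ hσ₁.1).add (TNaux.posSemidef_kronecker hρ₂.1 hS)
  have h1 : P ⊗ₖ σ₁ - Q ⊗ₖ σ₁ = ρ₁ ⊗ₖ σ₁ - ρ₂ ⊗ₖ σ₁ := by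
    rw [← TNaux.sub_kronecker, ← hPQ, TNaux.sub_kronecker]
  have h2 : ρ₂ ⊗ₖ R - ρ₂ ⊗ₖ S = ρ₂ ⊗ₖ σ₁ - ρ₂ ⊗ₖ σ₂ := by
    rw [← TNaux.kronecker_sub, ← hRS, TNaux.kronecker_sub]
  have hEq : ρ₁ ⊗ₖ σ₁ - ρ₂ ⊗ₖ σ₂ = (P ⊗ₖ σ₁ + ρ₂ ⊗ₖ R) - (Q ⊗ₖ σ₁ + ρ₂ ⊗ₖ S) := by
    have : (P ⊗ₖ σ₁ + ρ₂ ⊗ₖ R) - (Q ⊗ₖ σ₁ + ρ₂ ⊗ₖ S)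
        = (P ⊗ₖ σ₁ - Q ⊗ₖ σ₁) + (ρ₂ ⊗ₖ R - ρ₂ ⊗ₖ S) := by abel
    rw [this, h1, h2, sub_add_sub_cancel]
  have hkey := TNaux.traceNorm_sub_le hPbig hQbig
  rw [← hEq] at hkey
  have htrP : ((P ⊗ₖ σ₁ + ρ₂ ⊗ₖ R).trace).re = (P.trace).re + (R.trace).re := by
    rw [Matrix.trace_add, Matrix.trace_kronecker, Matrix.trace_kronecker, hσ₁.2, hρ₂.2,
      mul_one, one_mul, Complex.add_re]
  have htrQ : ((Q ⊗ₖ σ₁ + ρ₂ ⊗ₖ S).trace).re = (Q.trace).re + (S.trace).re := by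
    rw [Matrix.trace_add, Matrix.trace_kronecker, Matrix.trace_kronecker, hσ₁.2, hρ₂.2,
      mul_one, one_mul, Complex.add_re]
  rw [htrP, htrQ] at hkey
  have : traceNorm (ρ₁ ⊗ₖ σ₁ - ρ₂ ⊗ₖ σ₂) ≤ traceNorm (ρ₁ - ρ₂) + traceNorm (σ₁ - σ₂) := by
    rw [← htrPQ, ← htrRS]; linarith
  rw [traceDist, traceDist, traceDist]
  linarith
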